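/- Let A be a finite nonempty alphabet, d ≥ 1, L a regular language over A, and a : Fin d → A a tuple of letters. Then the d-ary numerical predicate R_a^L, defined by R_a^L(i, n) ↔ there exists v ∈ L with v.length = n and, for each j : Fin d, i j < n and the letter of v at position i j equals a j, is a regular numerical predicate. -/

import Mathlib

def NumPredEncoding {d : ℕ} (N : (Fin d → ℕ) → ℕ → Prop) :
    Language (Finset (Fin d)) :=
  {u | ∃ p : Fin d → Fin u.length,
    (∀ j : Fin d, ∀ q : Fin u.length, j ∈ u.get q ↔ q = p j) ∧
    N (fun j => (p j : ℕ)) u.length}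

def IsRegularNumPred {d : ℕ} (N : (Fin d → ℕ) → ℕ → Prop) : Prop :=
  (NumPredEncoding N).IsRegular

section Aux

variable {A : Type} [Nonempty A] {d : ℕ} {σ : Type} (M : DFA A σ) (a : Fin d → A)

/-- The NFA recognizing the encoding: it simulates `M` on a guessed word `v`,
tracking the set of marks seen so far. -/
def auxNFA : NFA (Finset (Fin d)) (σ × Finset (Fin d)) where
  step r S := {r' | ∃ b : A, (∀ j ∈ S, a j = b) ∧ Disjoint S r.2 ∧
    r' = (M.step r.1 b, r.2 ∪ S)}
  start := {(M.start, ∅)}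
  accept := {r | r.1 ∈ M.accept ∧ r.2 = Finset.univ}

lemma mem_foldl_union (u : List (Finset (Fin d))) (T : Finset (Fin d)) (j : Fin d) :
    j ∈ u.foldl (· ∪ ·) T ↔ j ∈ T ∨ ∃ S ∈ u, j ∈ S := by
  induction u generalizing T with
  | nil => simp
  | cons S u ih =>
      simp only [List.foldl_cons, ih, Finset.mem_union, List.mem_cons]
      constructor
      · rintro ((h | h) | ⟨S', hS', h⟩)
        · exact Or.inl h
        · exact Or.inr ⟨S, Or.inl rfl, h⟩
        · exact Or.inr ⟨S', Or.inr hS', h⟩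
      · rintro (h | ⟨S', (rfl | hS'), h⟩)
        · exact Or.inl (Or.inl h)
        · exact Or.inl (Or.inr h)
        · exact Or.inr ⟨S', hS', h⟩

lemma auxNFA_eval (u : List (Finset (Fin d))) (r : σ × Finset (Fin d)) :
    r ∈ (auxNFA M a).eval u ↔
      ∃ v : List A, v.length = u.length ∧
        (∀ k : ℕ, ∀ (hk : k < u.length) (hk' : k < v.length), ∀ j ∈ u[k], v[k] = a j) ∧
        u.Pairwise Disjoint ∧
        r = (M.eval v, u.foldl (· ∪ ·) ∅) := by
  induction u using List.reverseRecOn generalizing r with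
  | nil =>
      simp only [NFA.eval_nil, List.length_nil, List.foldl_nil]
      constructor
      · rintro h
        have : r = (M.start, ∅) := h
        exact ⟨[], rfl, by simp, List.Pairwise.nil, by simpa [DFA.eval] using this⟩
      · rintro ⟨v, hv, _, _, rfl⟩
        have : v = [] := List.length_eq_zero_iff.mp hv
        subst this
        rfl
  | append_singleton u S ih =>
      rw [NFA.eval_append_singleton, NFA.mem_stepSet]
      constructor
      · rintro ⟨t, ht, hstep⟩
        obtain ⟨v, hvlen, hvlet, hpw, rfl⟩ := (ih t).mp ht
        obtain ⟨b, hb, hdisj, rfl⟩ := hstep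
        refine ⟨v ++ [b], by simp [hvlen], ?_, ?_, ?_⟩
        · intro k hk hk' j hj
          rcases lt_or_eq_of_le (Nat.lt_succ_iff.mp (by simpa using hk)) with h | h
          · have hju : j ∈ u[k] := by
              rwa [List.getElem_append_left h] at hj
            have := hvlet k h (hvlen ▸ h) j hju
            rwa [List.getElem_append_left (hvlen ▸ h)]
          · subst h
            have hjS : j ∈ S := by
              rw [List.getElem_append_right (le_refl u.length)] at hj
              simpa using hj
            have hvb : (v ++ [b])[u.length]'hk' = b := by
              rw [List.getElem_append_right (le_of_eq hvlen)]
              simp [hvlen]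
            rw [hvb]
            exact (hb j hjS).symm
        · rw [List.pairwise_append]
          refine ⟨hpw, List.pairwise_singleton _ _, ?_⟩
          intro x hx y hy
          simp only [List.mem_singleton] at hy
          subst hy
          -- Disjoint x S from hdisj : Disjoint S (foldl union)
          rw [Finset.disjoint_left]
          intro j hjx hjS
          have : j ∈ u.foldl (· ∪ ·) ∅ := (mem_foldl_union u ∅ j).mpr (Or.inr ⟨x, hx, hjx⟩)
          exact (Finset.disjoint_right.mp hdisj this) hjS
        · simp [DFA.eval]
      · rintro ⟨v, hvlen, hvlet, hpw, rfl⟩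
        have hvne : v ≠ [] := by
          intro h; subst h; simp at hvlen
        obtain ⟨w, b, rfl⟩ := (List.eq_nil_or_concat v).resolve_left hvne
        simp only [List.concat_eq_append] at hvlen hvlet ⊢
        have hwlen : w.length = u.length := by
          simpa using hvlen
        rw [List.pairwise_append] at hpw
        obtain ⟨hpwu, -, hdisj⟩ := hpw
        refine ⟨(M.eval w, u.foldl (· ∪ ·) ∅), (ih _).mpr ⟨w, hwlen, ?_, hpwu, rfl⟩, ?_⟩
        · intro k hk hk' j hj
          have hku : k < (u ++ [S]).length := by simp; omega
          have hkw : k < (w ++ [b]).length := by simp; omega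
          have := hvlet k hku hkw j (by rwa [List.getElem_append_left hk])
          rwa [List.getElem_append_left hk'] at this
        · refine ⟨b, ?_, ?_, ?_⟩
          · intro j hjS
            have hku : u.length < (u ++ [S]).length := by simp
            have hkw : u.length < (w ++ [b]).length := by simp; omega
            have hjv : j ∈ (u ++ [S])[u.length] := by
              rw [List.getElem_append_right (le_refl u.length)]; simpa using hjS
            have hav := hvlet u.length hku hkw j hjv
            have hb' : (w ++ [b])[u.length]'hkw = b := by
              rw [List.getElem_append_right hwlen.le]
              simp [hwlen]
            exact hav.symm.trans hb'
          · rw [Finset.disjoint_left]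
            intro j hjS hjU
            obtain ⟨x, hx, hjx⟩ := ((mem_foldl_union u ∅ j).mp hjU).resolve_left (by simp)
            exact (Finset.disjoint_left.mp (hdisj x hx S (List.mem_singleton_self S)) hjx) hjS
          · simp [DFA.eval]

end Aux

theorem R_regular (A : Type) [Fintype A] [Nonempty A] (d : ℕ) (hd : 1 ≤ d)
    (L : Set (List A)) (hreg : Language.IsRegular (L : Language A)) (a : Fin d → A) :
    IsRegularNumPred (fun (i : Fin d → ℕ) (n : ℕ) =>
      ∃ v ∈ L, v.length = n ∧ ∀ j : Fin d, i j < n ∧ v[i j]? = some (a j)) := by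
  classical
  obtain ⟨σ, _, M, hM⟩ := hreg
  refine ⟨Set (σ × Finset (Fin d)), inferInstance, (auxNFA M a).toDFA, ?_⟩
  rw [NFA.toDFA_correct]
  ext u
  rw [NFA.mem_accepts]
  constructor
  · rintro ⟨r, hracc, hrev⟩
    obtain ⟨v, hvlen, hvlet, hpw, rfl⟩ := (auxNFA_eval M a u r).mp hrev
    obtain ⟨hacc, huniv⟩ := hracc
    dsimp only at hacc huniv
    have hvL : v ∈ L := by
      rw [← hM]
      exact hacc
    -- define p
    have hex : ∀ j : Fin d, ∃ q : Fin u.length, j ∈ u.get q := by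
      intro j
      have : j ∈ u.foldl (· ∪ ·) ∅ := by rw [huniv]; exact Finset.mem_univ j
      obtain ⟨S, hS, hjS⟩ := ((mem_foldl_union u ∅ j).mp this).resolve_left (by simp)
      obtain ⟨q, hq⟩ := List.mem_iff_get.mp hS
      exact ⟨q, hq ▸ hjS⟩
    choose p hp using hex
    have hpget : ∀ j : Fin d, ∀ q : Fin u.length, j ∈ u.get q ↔ q = p j := by
      intro j q
      constructor
      · intro hjq
        by_contra hne
        have hpwg := List.pairwise_iff_get.mp hpw
        rcases lt_or_gt_of_ne hne with h | h
        · exact (Finset.disjoint_left.mp (hpwg q (p j) h) hjq) (hp j)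
        · exact (Finset.disjoint_left.mp (hpwg (p j) q h) (hp j)) hjq
      · rintro rfl
        exact hp j
    refine ⟨p, hpget, v, hvL, hvlen, ?_⟩
    intro j
    refine ⟨(p j).isLt, ?_⟩
    have hlt : (p j : ℕ) < v.length := by
      have := (p j).isLt; omega
    rw [List.getElem?_eq_getElem hlt]
    have := hvlet (p j) (p j).isLt hlt j (by simpa [List.get_eq_getElem] using hp j)
    rw [this]
  · rintro ⟨p, hp, v, hvL, hvlen, hpj⟩
    refine ⟨(M.eval v, u.foldl (· ∪ ·) ∅), ⟨?_, ?_⟩, ?_⟩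
    · show M.eval v ∈ M.accept
      have : v ∈ M.accepts := hM ▸ hvL
      exact this
    · ext j
      simp only [Finset.mem_univ, iff_true]
      rw [mem_foldl_union]
      refine Or.inr ⟨u.get (p j), ?_, (hp j (p j)).mpr rfl⟩
      exact List.get_mem u (p j) --  u (p j) (p j).isLt
    · refine (auxNFA_eval M a u _).mpr ⟨v, hvlen, ?_, ?_, rfl⟩
      · intro k hk hk' j hj
        have hq : (⟨k, hk⟩ : Fin u.length) = p j := (hp j ⟨k, hk⟩).mp (by simpa [List.get_eq_getElem] using hj)
        have hk_eq : k = (p j : ℕ) := by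
          have := congrArg (Fin.val) hq
          simpa using this
        subst hk_eq
        have := (hpj j).2
        rw [List.getElem?_eq_getElem hk'] at this
        exact Option.some.inj this
      · rw [List.pairwise_iff_get]
        intro i j hij
        rw [Finset.disjoint_left]
        intro x hxi hxj
        have h1 : i = p x := (hp x i).mp hxi
        have h2 : j = p x := (hp x j).mp hxj
        rw [h1, h2] at hij
        exact lt_irrefl _ hij
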